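/- Let n ≥ 2 be an integer and let f : ℕ → ℝ be any function. Then (1/n!) · Σ_{σ ∈ S_n} (−1)^{c(σ)} F(σ) = f(n−1)/(n−1) − f(n)/n, where c(σ) denotes the number of orbits of σ on {1,…,n} (fixed points counted as orbits of size 1). -/

import Mathlib

open Finset

/-- The number of orbits of a permutation of `Fin n` (fixed points counted as
orbits of size 1): the number of nontrivial cycles plus the number of fixed points. -/
def cyclesCount {n : ℕ} (σ : Equiv.Perm (Fin n)) : ℕ :=
  Multiset.card σ.cycleType + (n - σ.cycleType.sum)

/-- The additive class function `F(σ) = ∑_{c orbit of σ} f(|c|)`, fixed points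
contributing `f 1`. -/
noncomputable def addClassFun {n : ℕ} (f : ℕ → ℝ) (σ : Equiv.Perm (Fin n)) : ℝ :=
  (σ.cycleType.map f).sum + (n - σ.cycleType.sum) * f 1

namespace MoebiusAux

open Equiv Equiv.Perm

variable {α : Type*} [Fintype α] [DecidableEq α]

/-- The orbit of `x` under `σ` as a finset. -/
def Ob (σ : Perm α) (x : α) : Finset α := insert x (σ.cycleOf x).support

/-- The sign of a permutation, as a real number. -/
noncomputable def SignR (σ : Perm α) : ℝ := ((Perm.sign σ : ℤ) : ℝ)

lemma mem_Ob {σ : Perm α} {x y : α} : y ∈ Ob σ x ↔ σ.SameCycle x y := by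
  by_cases hx : σ x = x
  · rw [Ob, (Equiv.Perm.cycleOf_eq_one_iff _).mpr hx]
    simp only [Equiv.Perm.support_one, LawfulSingleton.insert_empty_eq, Finset.mem_singleton]
    constructor
    · rintro rfl; exact Equiv.Perm.SameCycle.refl _ _
    · rintro ⟨i, rfl⟩
      exact Equiv.Perm.zpow_apply_eq_self_of_apply_eq_self hx i
  · rw [Ob]
    rw [Finset.mem_insert, Equiv.Perm.mem_support_cycleOf_iff' hx]
    constructor
    · rintro (rfl | h)
      · exact Equiv.Perm.SameCycle.refl _ _
      · exact h
    · intro h; exact Or.inr h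

lemma x_mem_Ob {σ : Perm α} {x : α} : x ∈ Ob σ x := Finset.mem_insert_self _ _

lemma card_Ob_le (σ : Perm α) (x : α) : (Ob σ x).card ≤ Fintype.card α :=
  Finset.card_le_univ _

lemma Ob_of_fixed {σ : Perm α} {x : α} (hx : σ x = x) : Ob σ x = {x} := by
  rw [Ob, (Equiv.Perm.cycleOf_eq_one_iff _).mpr hx]
  simp

lemma pow_swap_mul {σ : Perm α} {x u v : α} (hu : u ∉ Ob σ x) (hv : v ∉ Ob σ x) :
    ∀ k : ℕ, ((Equiv.swap u v * σ) ^ k) x = (σ ^ k) x := by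
  intro k
  induction k with
  | zero => simp
  | succ k ih =>
    have l1 : ((Equiv.swap u v * σ) ^ (k + 1)) x
        = Equiv.swap u v (σ (((Equiv.swap u v * σ) ^ k) x)) := by
      rw [pow_succ', Equiv.Perm.mul_apply, Equiv.Perm.mul_apply]
    have l2 : (σ ^ (k + 1)) x = σ ((σ ^ k) x) := by rw [pow_succ', Equiv.Perm.mul_apply]
    rw [l1, l2, ih]
    have h : σ ((σ ^ k) x) ∈ Ob σ x := by
      rw [mem_Ob]
      refine ⟨1 + (k : ℤ), ?_⟩
      rw [zpow_add, zpow_one, zpow_natCast, Equiv.Perm.mul_apply]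
    exact Equiv.swap_apply_of_ne_of_ne (fun h' => hu (h' ▸ h)) (fun h' => hv (h' ▸ h))

lemma Ob_swap_mul {σ : Perm α} {x u v : α} (hu : u ∉ Ob σ x) (hv : v ∉ Ob σ x) :
    Ob (Equiv.swap u v * σ) x = Ob σ x := by
  ext y
  rw [mem_Ob, mem_Ob]
  constructor
  · intro h
    obtain ⟨i, -, -, hi⟩ := Equiv.Perm.SameCycle.exists_pow_eq _ h
    exact ⟨(i : ℤ), by rw [zpow_natCast, ← pow_swap_mul hu hv i, hi]⟩
  · intro h
    obtain ⟨i, -, -, hi⟩ := Equiv.Perm.SameCycle.exists_pow_eq _ h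
    exact ⟨(i : ℤ), by rw [zpow_natCast, pow_swap_mul hu hv i, hi]⟩

variable [LinearOrder α]

/-- First point outside the orbit. -/
noncomputable def uu (σ : Perm α) (x : α) : α :=
  if h : ((Ob σ x)ᶜ).Nonempty then ((Ob σ x)ᶜ).min' h else x

/-- Second point outside the orbit. -/
noncomputable def vv (σ : Perm α) (x : α) : α :=
  if h : (((Ob σ x)ᶜ).erase (uu σ x)).Nonempty then (((Ob σ x)ᶜ).erase (uu σ x)).min' h else x

lemma uv_spec {σ : Perm α} {x : α} (h2 : 2 ≤ ((Ob σ x)ᶜ).card) :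
    uu σ x ∉ Ob σ x ∧ vv σ x ∉ Ob σ x ∧ uu σ x ≠ vv σ x := by
  have h1 : ((Ob σ x)ᶜ).Nonempty := Finset.card_pos.mp (by omega)
  have hu : uu σ x ∈ (Ob σ x)ᶜ := by rw [uu, dif_pos h1]; exact Finset.min'_mem _ _
  have h3 : (((Ob σ x)ᶜ).erase (uu σ x)).Nonempty := by
    rw [← Finset.card_pos, Finset.card_erase_of_mem hu]; omega
  have hv : vv σ x ∈ ((Ob σ x)ᶜ).erase (uu σ x) := by
    rw [vv, dif_pos h3]; exact Finset.min'_mem _ _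
  exact ⟨Finset.mem_compl.mp hu, Finset.mem_compl.mp (Finset.mem_of_mem_erase hv),
    (Finset.ne_of_mem_erase hv).symm⟩

lemma uu_congr {σ τ : Perm α} {x : α} (h : Ob σ x = Ob τ x) : uu σ x = uu τ x := by
  simp only [uu, h]

lemma vv_congr {σ τ : Perm α} {x : α} (h : Ob σ x = Ob τ x) : vv σ x = vv τ x := by
  simp only [vv, uu, h]; rfl

lemma SignR_swap_mul {σ : Perm α} {u v : α} (huv : u ≠ v) :
    SignR (Equiv.swap u v * σ) = - SignR σ := by
  rw [SignR, SignR, Equiv.Perm.sign_mul, Equiv.Perm.sign_swap huv]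
  push_cast
  ring

lemma sum_small (x : α) (q : ℕ → ℝ) :
    ∑ σ ∈ univ.filter (fun σ : Perm α => (Ob σ x).card + 2 ≤ Fintype.card α),
      SignR σ * q ((Ob σ x).card) = 0 := by
  refine Finset.sum_involution (fun σ _ => Equiv.swap (uu σ x) (vv σ x) * σ) ?_ ?_ ?_ ?_
  case _ =>
    intro σ hσ
    have h2 : 2 ≤ ((Ob σ x)ᶜ).card := by
      rw [Finset.card_compl]
      have := (Finset.mem_filter.mp hσ).2
      omega
    obtain ⟨hu, hv, huv⟩ := uv_spec h2
    rw [Ob_swap_mul hu hv, SignR_swap_mul huv]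
    ring
  case _ =>
    intro σ hσ _ heq
    have h2 : 2 ≤ ((Ob σ x)ᶜ).card := by
      rw [Finset.card_compl]
      have := (Finset.mem_filter.mp hσ).2
      omega
    obtain ⟨hu, hv, huv⟩ := uv_spec h2
    try dsimp only at heq
    have h1 : Equiv.swap (uu σ x) (vv σ x) = 1 :=
      mul_right_cancel (heq.trans (one_mul σ).symm)
    have h3 := congrArg (fun e : Perm α => e (uu σ x)) h1
    simp only [Equiv.swap_apply_left, Equiv.Perm.coe_one, id_eq] at h3
    exact huv h3.symm
  case _ =>
    intro σ hσ
    have h2 : 2 ≤ ((Ob σ x)ᶜ).card := by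
      rw [Finset.card_compl]
      have := (Finset.mem_filter.mp hσ).2
      omega
    obtain ⟨hu, hv, huv⟩ := uv_spec h2
    rw [Finset.mem_filter]
    refine ⟨Finset.mem_univ _, ?_⟩
    rw [Ob_swap_mul hu hv]
    exact (Finset.mem_filter.mp hσ).2
  case _ =>
    intro σ hσ
    have h2 : 2 ≤ ((Ob σ x)ᶜ).card := by
      rw [Finset.card_compl]
      have := (Finset.mem_filter.mp hσ).2
      omega
    obtain ⟨hu, hv, huv⟩ := uv_spec h2
    have hOb : Ob (Equiv.swap (uu σ x) (vv σ x) * σ) x = Ob σ x := Ob_swap_mul hu hv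
    try dsimp only
    rw [uu_congr hOb, vv_congr hOb, ← mul_assoc, Equiv.swap_mul_self, one_mul]

lemma sum_sign_zero (h2 : 2 ≤ Fintype.card α) : ∑ σ : Perm α, SignR σ = 0 := by
  obtain ⟨a, b, hab⟩ := Fintype.exists_pair_of_one_lt_card (α := α) (by omega)
  refine Finset.sum_involution (fun σ _ => Equiv.swap a b * σ) ?_ ?_ ?_ ?_
  case _ => intro σ _; (try dsimp only); rw [SignR_swap_mul hab]; ring
  case _ =>
    intro σ _ _ heq
    try dsimp only at heq
    have h1 : Equiv.swap a b = 1 := mul_right_cancel (heq.trans (one_mul σ).symm)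
    have h3 := congrArg (fun e : Perm α => e a) h1
    simp only [Equiv.swap_apply_left, Equiv.Perm.coe_one, id_eq] at h3
    exact hab h3.symm
  case _ => intro σ _; exact Finset.mem_univ _
  case _ => intro σ _; (try dsimp only); rw [← mul_assoc, Equiv.swap_mul_self, one_mul]

lemma point_sum (h2 : 2 ≤ Fintype.card α) (x : α) (q : ℕ → ℝ) :
    ∑ σ : Perm α, SignR σ * q ((Ob σ x).card)
      = (q (Fintype.card α) - q (Fintype.card α - 1)) *
        ∑ σ ∈ univ.filter (fun σ : Perm α => (Ob σ x).card = Fintype.card α), SignR σ := by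
  set N := Fintype.card α with hN
  have key : ∀ r : ℕ → ℝ, ∑ σ : Perm α, SignR σ * r ((Ob σ x).card)
      = r N * (∑ σ ∈ univ.filter (fun σ : Perm α => (Ob σ x).card = N), SignR σ)
        + r (N - 1) *
          (∑ σ ∈ univ.filter (fun σ : Perm α => (Ob σ x).card = N - 1), SignR σ) := by
    intro r
    rw [← Finset.sum_filter_add_sum_filter_not univ (fun σ : Perm α => (Ob σ x).card = N)
      (fun σ => SignR σ * r ((Ob σ x).card))]
    congr 1
    · rw [Finset.mul_sum]
      apply Finset.sum_congr rfl
      intro σ hσ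
      rw [(Finset.mem_filter.mp hσ).2]
      ring
    · rw [← Finset.sum_filter_add_sum_filter_not
        (univ.filter fun σ : Perm α => ¬(Ob σ x).card = N)
        (fun σ : Perm α => (Ob σ x).card = N - 1)
        (fun σ => SignR σ * r ((Ob σ x).card)), Finset.filter_filter, Finset.filter_filter]
      have hset1 : univ.filter (fun σ : Perm α => ¬(Ob σ x).card = N ∧ (Ob σ x).card = N - 1)
          = univ.filter (fun σ : Perm α => (Ob σ x).card = N - 1) := by
        apply Finset.filter_congr
        intro σ _
        constructor
        · exact fun h => h.2
        · intro h; exact ⟨by omega, h⟩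
      have hset2 : univ.filter (fun σ : Perm α => ¬(Ob σ x).card = N ∧ ¬(Ob σ x).card = N - 1)
          = univ.filter (fun σ : Perm α => (Ob σ x).card + 2 ≤ N) := by
        apply Finset.filter_congr
        intro σ _
        have hle : (Ob σ x).card ≤ N := card_Ob_le σ x
        constructor
        · intro h; omega
        · intro h; omega
      rw [hset1, hset2, sum_small x r]
      rw [Finset.mul_sum, add_zero]
      apply Finset.sum_congr rfl
      intro σ hσ
      rw [(Finset.mem_filter.mp hσ).2]
      ring
  have h0 : (∑ σ ∈ univ.filter (fun σ : Perm α => (Ob σ x).card = N), SignR σ)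
      + (∑ σ ∈ univ.filter (fun σ : Perm α => (Ob σ x).card = N - 1), SignR σ) = 0 := by
    have hk := key (fun _ => 1)
    simp only [mul_one, one_mul] at hk
    rw [sum_sign_zero h2] at hk
    linarith
  rw [key q]
  set A := ∑ σ ∈ univ.filter (fun σ : Perm α => (Ob σ x).card = N), SignR σ
  set B := ∑ σ ∈ univ.filter (fun σ : Perm α => (Ob σ x).card = N - 1), SignR σ
  have : B = -A := by linarith
  rw [this]
  ring

lemma Ob_card_eq_iff (h2 : 2 ≤ Fintype.card α) (x : α) (σ : Perm α) :
    (Ob σ x).card = Fintype.card α ↔ σ.cycleType = {Fintype.card α} := by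
  constructor
  · intro h
    have hσx : σ x ≠ x := by
      intro hfix
      rw [Ob_of_fixed hfix, Finset.card_singleton] at h
      omega
    have hOb : Ob σ x = (σ.cycleOf x).support := by
      rw [Ob, Finset.insert_eq_self.mpr
        ((Equiv.Perm.mem_support_cycleOf_iff' hσx).mpr (Equiv.Perm.SameCycle.refl _ _))]
    have hsupp : (σ.cycleOf x).support = Finset.univ := by
      apply Finset.eq_univ_of_card
      rw [← hOb, h]
    have hall : ∀ y, σ.SameCycle x y := by
      intro y
      rw [← Equiv.Perm.mem_support_cycleOf_iff' hσx, hsupp]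
      exact Finset.mem_univ y
    have hcyc : (σ.cycleOf x).IsCycle := Equiv.Perm.isCycle_cycleOf σ hσx
    have hσeq : σ.cycleOf x = σ := by
      ext y
      exact Equiv.Perm.SameCycle.cycleOf_apply (hall y)
    have hic : σ.IsCycle := hσeq ▸ hcyc
    rw [hic.cycleType]
    have hsc : σ.support = Finset.univ := by rw [← hσeq]; exact hsupp
    rw [hsc, Finset.card_univ]
  · intro h
    have hcyc : σ.IsCycle := by
      rw [← Equiv.Perm.card_cycleType_eq_one, h]
      simp
    have hcard : σ.support.card = Fintype.card α := by
      rw [← Equiv.Perm.sum_cycleType, h]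
      simp
    have hsupp : σ.support = Finset.univ :=
      Finset.eq_univ_of_card _ (by rw [hcard])
    have hx : σ x ≠ x := by
      rw [← Equiv.Perm.mem_support, hsupp]; exact Finset.mem_univ x
    have hco : σ.cycleOf x = σ := hcyc.cycleOf_eq hx
    rw [Ob, hco, hsupp, Finset.insert_eq_self.mpr (Finset.mem_univ x), Finset.card_univ]

lemma addClassFun_point_sum (f : ℕ → ℝ) (σ : Perm α) :
    (σ.cycleType.map f).sum + ((Fintype.card α : ℝ) - (σ.cycleType.sum : ℝ)) * f 1
      = ∑ x : α, f ((Ob σ x).card) / ((Ob σ x).card : ℝ) := by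
  rw [← Finset.sum_add_sum_compl σ.support
      (fun x => f ((Ob σ x).card) / ((Ob σ x).card : ℝ))]
  congr 1
  · rw [← Finset.sum_fiberwise_of_maps_to
        (g := fun x => σ.cycleOf x) (t := σ.cycleFactorsFinset)
        (fun x hx => (Equiv.Perm.cycleOf_mem_cycleFactorsFinset_iff).mpr hx)
        (fun x => f ((Ob σ x).card) / ((Ob σ x).card : ℝ))]
    have hdef : (σ.cycleType.map f).sum
        = ∑ c ∈ σ.cycleFactorsFinset, f c.support.card := by
      rw [Equiv.Perm.cycleType_def, Multiset.map_map]
      rfl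
    rw [hdef]
    apply Finset.sum_congr rfl
    intro c hc
    have hc' := Equiv.Perm.mem_cycleFactorsFinset_iff.mp hc
    have hfiber : σ.support.filter (fun x => σ.cycleOf x = c) = c.support := by
      ext y
      simp only [Finset.mem_filter]
      constructor
      · rintro ⟨hy, hcy⟩
        rw [← hcy]
        exact Equiv.Perm.mem_support_cycleOf_iff.mpr ⟨Equiv.Perm.SameCycle.refl _ _, hy⟩
      · intro hy
        have h1 : c = σ.cycleOf y := Equiv.Perm.cycle_is_cycleOf hy hc
        have h2 : y ∈ σ.support := by
          rw [Equiv.Perm.mem_support, ← hc'.2 y hy]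
          exact Equiv.Perm.mem_support.mp hy
        exact ⟨h2, h1.symm⟩
    rw [hfiber]
    have hval : ∀ y ∈ c.support, f ((Ob σ y).card) / ((Ob σ y).card : ℝ)
        = f c.support.card / (c.support.card : ℝ) := by
      intro y hy
      have h1 : c = σ.cycleOf y := Equiv.Perm.cycle_is_cycleOf hy hc
      have hOb : Ob σ y = c.support := by
        rw [Ob, ← h1, Finset.insert_eq_self.mpr hy]
      rw [hOb]
    rw [Finset.sum_congr rfl hval, Finset.sum_const, nsmul_eq_mul]
    have hm : (c.support.card : ℝ) ≠ 0 := by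
      have := hc'.1.two_le_card_support
      positivity
    field_simp
  · have hval : ∀ x ∈ σ.supportᶜ, f ((Ob σ x).card) / ((Ob σ x).card : ℝ) = f 1 := by
      intro x hx
      have hfix : σ x = x := by
        rw [← Equiv.Perm.notMem_support]
        exact Finset.mem_compl.mp hx
      rw [Ob_of_fixed hfix, Finset.card_singleton]
      norm_num
    rw [Finset.sum_congr rfl hval, Finset.sum_const, nsmul_eq_mul, Finset.card_compl,
      Equiv.Perm.sum_cycleType, ← Nat.cast_sub (Finset.card_le_univ _)]

open Fin.NatCast in
lemma rot_pow (m : ℕ) : ∀ (k : ℕ) (y : Fin (m + 1)),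
    ((finRotate (m + 1)) ^ k) y = y + (k : Fin (m + 1)) := by
  intro k
  induction k with
  | zero => intro y; simp
  | succ k ih =>
    intro y
    rw [pow_succ', Equiv.Perm.mul_apply, ih, finRotate_succ_apply]
    push_cast
    rw [add_assoc]

lemma commute_rot_apply {m : ℕ} {τ : Perm (Fin (m + 1))}
    (h : Commute τ (finRotate (m + 1))) (i : Fin (m + 1)) : τ i = τ 0 + i := by
  have h1 : ((finRotate (m + 1)) ^ (i.val)) 0 = i := by
    rw [rot_pow, zero_add, Fin.cast_val_eq_self]
  have h2 := (h.pow_right i.val).eq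
  calc τ i = τ (((finRotate (m + 1)) ^ (i.val)) 0) := by rw [h1]
    _ = (τ * (finRotate (m + 1)) ^ (i.val)) 0 := rfl
    _ = ((finRotate (m + 1)) ^ (i.val) * τ) 0 := by rw [h2]
    _ = ((finRotate (m + 1)) ^ (i.val)) (τ 0) := rfl
    _ = τ 0 + i := by rw [rot_pow, Fin.cast_val_eq_self]

lemma card_commute_rot (m : ℕ) :
    (univ.filter fun τ : Perm (Fin (m + 1)) =>
      τ * finRotate (m + 1) = finRotate (m + 1) * τ).card = m + 1 := by
  have : (univ.filter fun τ : Perm (Fin (m + 1)) =>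
      τ * finRotate (m + 1) = finRotate (m + 1) * τ).card = (univ : Finset (Fin (m + 1))).card := by
    apply Finset.card_bij (fun τ _ => τ 0)
    · intro τ _; exact Finset.mem_univ _
    · intro τ hτ τ' hτ' h
      have hcτ : Commute τ (finRotate (m + 1)) := (Finset.mem_filter.mp hτ).2
      have hcτ' : Commute τ' (finRotate (m + 1)) := (Finset.mem_filter.mp hτ').2
      apply Equiv.ext
      intro i
      rw [commute_rot_apply hcτ i, commute_rot_apply hcτ' i, h]
    · intro c _
      refine ⟨(finRotate (m + 1)) ^ (c.val), ?_, ?_⟩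
      · rw [Finset.mem_filter]
        exact ⟨Finset.mem_univ _, ((Commute.refl _).pow_left c.val)⟩
      · rw [rot_pow, zero_add, Fin.cast_val_eq_self]
  rw [this, Finset.card_univ, Fintype.card_fin]

lemma card_fullcycles_mul (m : ℕ) (hm : 1 ≤ m) :
    (univ.filter fun σ : Perm (Fin (m + 1)) => σ.cycleType = {m + 1}).card * (m + 1)
      = Nat.factorial (m + 1) := by
  set r := finRotate (m + 1) with hr_def
  have hr : r.cycleType = {m + 1} := cycleType_finRotate_of_le (by omega)
  have hmaps : ∀ g : Perm (Fin (m + 1)), g ∈ (univ : Finset (Perm (Fin (m + 1)))) →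
      g * r * g⁻¹ ∈ univ.filter fun σ : Perm (Fin (m + 1)) => σ.cycleType = {m + 1} := by
    intro g _
    rw [Finset.mem_filter]
    exact ⟨Finset.mem_univ _, Equiv.Perm.cycleType_conj.trans hr⟩
  have hcount := Finset.card_eq_sum_card_fiberwise hmaps
  have hfiber : ∀ σ ∈ univ.filter (fun σ : Perm (Fin (m + 1)) => σ.cycleType = {m + 1}),
      (univ.filter fun g : Perm (Fin (m + 1)) => g * r * g⁻¹ = σ).card = m + 1 := by
    intro σ hσ
    obtain ⟨g₀, hg₀⟩ : ∃ g₀ : Perm (Fin (m + 1)), g₀ * r * g₀⁻¹ = σ := by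
      have hic : IsConj r σ :=
        Equiv.Perm.isConj_of_cycleType_eq (hr.trans ((Finset.mem_filter.mp hσ).2).symm)
      rw [isConj_iff] at hic
      exact hic
    have hbij : (univ.filter fun g : Perm (Fin (m + 1)) => g * r * g⁻¹ = σ).card
        = (univ.filter fun τ : Perm (Fin (m + 1)) =>
            τ * finRotate (m + 1) = finRotate (m + 1) * τ).card := by
      apply Finset.card_bij (fun g _ => g₀⁻¹ * g)
      · intro g hg
        have hgg : g * r * g⁻¹ = g₀ * r * g₀⁻¹ := ((Finset.mem_filter.mp hg).2).trans hg₀.symm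
        rw [Finset.mem_filter]
        refine ⟨Finset.mem_univ _, ?_⟩
        calc g₀⁻¹ * g * r = g₀⁻¹ * (g * r * g⁻¹) * g := by group
          _ = g₀⁻¹ * (g₀ * r * g₀⁻¹) * g := by rw [hgg]
          _ = r * (g₀⁻¹ * g) := by group
      · intro g _ g' _ h
        exact mul_left_cancel h
      · intro τ hτ
        have hcτ : τ * r = r * τ := (Finset.mem_filter.mp hτ).2
        refine ⟨g₀ * τ, ?_, by group⟩
        rw [Finset.mem_filter]
        refine ⟨Finset.mem_univ _, ?_⟩
        calc g₀ * τ * r * (g₀ * τ)⁻¹ = g₀ * (τ * r * τ⁻¹) * g₀⁻¹ := by group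
          _ = g₀ * (r * τ * τ⁻¹) * g₀⁻¹ := by rw [hcτ]
          _ = g₀ * r * g₀⁻¹ := by group
          _ = σ := hg₀
    rw [hbij, card_commute_rot m]
  rw [Finset.sum_congr rfl hfiber, Finset.sum_const, smul_eq_mul] at hcount
  rw [← hcount, Finset.card_univ, Fintype.card_perm, Fintype.card_fin]

end MoebiusAux

theorem moebius_inversion_additive_class_functions
    (n : ℕ) (hn : 2 ≤ n) (f : ℕ → ℝ) :
    (1 / (Nat.factorial n) : ℝ) * ∑ σ : Equiv.Perm (Fin n), (-1 : ℝ) ^ (cyclesCount σ) * addClassFun f σ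
      = f (n - 1) / (n - 1) - f n / n := by
  classical
  open MoebiusAux in
  have hN : Fintype.card (Fin n) = n := Fintype.card_fin n
  have hfc : (univ.filter fun σ : Equiv.Perm (Fin n) => σ.cycleType = {n}).card * n
      = Nat.factorial n := by
    obtain ⟨m, rfl⟩ : ∃ m, n = m + 1 := ⟨n - 1, by omega⟩
    exact MoebiusAux.card_fullcycles_mul m (by omega)
  have hsign : ∀ σ : Equiv.Perm (Fin n),
      (-1 : ℝ) ^ cyclesCount σ = (-1 : ℝ) ^ n * MoebiusAux.SignR σ := by
    intro σ
    have hs : σ.cycleType.sum ≤ n := by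
      rw [Equiv.Perm.sum_cycleType]
      have := Finset.card_le_univ σ.support
      rwa [hN] at this
    have hsr : MoebiusAux.SignR σ
        = (-1 : ℝ) ^ (σ.cycleType.sum + Multiset.card σ.cycleType) := by
      rw [MoebiusAux.SignR, Equiv.Perm.sign_of_cycleType]
      push_cast
      rfl
    rw [hsr, cyclesCount, ← pow_add]
    have hexp : n + (σ.cycleType.sum + Multiset.card σ.cycleType)
        = (Multiset.card σ.cycleType + (n - σ.cycleType.sum)) + 2 * σ.cycleType.sum := by
      omega
    rw [hexp, pow_add, pow_add, pow_mul]
    norm_num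
    rw [pow_add]
  have hacf : ∀ σ : Equiv.Perm (Fin n), addClassFun f σ
      = ∑ x : Fin n, f ((MoebiusAux.Ob σ x).card) / ((MoebiusAux.Ob σ x).card : ℝ) := by
    intro σ
    have h := MoebiusAux.addClassFun_point_sum f σ
    rw [hN] at h
    exact h
  rw [Finset.sum_congr rfl (fun σ _ => by rw [hsign σ, hacf σ])]
  have hswap : ∑ σ : Equiv.Perm (Fin n), ((-1 : ℝ) ^ n * MoebiusAux.SignR σ)
        * (∑ x : Fin n, f ((MoebiusAux.Ob σ x).card) / ((MoebiusAux.Ob σ x).card : ℝ))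
      = (-1 : ℝ) ^ n * ∑ x : Fin n, ∑ σ : Equiv.Perm (Fin n),
          MoebiusAux.SignR σ * (f ((MoebiusAux.Ob σ x).card) / ((MoebiusAux.Ob σ x).card : ℝ)) := by
    rw [Finset.mul_sum]
    simp_rw [mul_assoc, Finset.mul_sum]
    rw [Finset.sum_comm]
  rw [hswap]
  set C : ℝ := ((univ.filter fun σ : Equiv.Perm (Fin n) => σ.cycleType = {n}).card : ℝ) with hCdef
  have hxs : ∀ x : Fin n, ∑ σ : Equiv.Perm (Fin n),
        MoebiusAux.SignR σ * (f ((MoebiusAux.Ob σ x).card) / ((MoebiusAux.Ob σ x).card : ℝ))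
      = (f n / (n : ℝ) - f (n - 1) / ((n - 1 : ℕ) : ℝ)) * ((-1 : ℝ) ^ (n + 1) * C) := by
    intro x
    have h := MoebiusAux.point_sum (α := Fin n) (by rw [hN]; exact hn) x
      (fun k => f k / (k : ℝ))
    rw [hN] at h
    rw [h]
    congr 1
    have hsetx : univ.filter (fun σ : Equiv.Perm (Fin n) => (MoebiusAux.Ob σ x).card = n)
        = univ.filter (fun σ : Equiv.Perm (Fin n) => σ.cycleType = {n}) := by
      apply Finset.filter_congr
      intro σ _
      have h2 := MoebiusAux.Ob_card_eq_iff (α := Fin n) (by rw [hN]; exact hn) x σ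
      rw [hN] at h2
      simpa using h2
    rw [hsetx]
    have hval : ∀ σ ∈ univ.filter (fun σ : Equiv.Perm (Fin n) => σ.cycleType = {n}),
        MoebiusAux.SignR σ = (-1 : ℝ) ^ (n + 1) := by
      intro σ hσ
      have hct := (Finset.mem_filter.mp hσ).2
      rw [MoebiusAux.SignR, Equiv.Perm.sign_of_cycleType, hct]
      push_cast
      simp
    rw [Finset.sum_congr rfl hval, Finset.sum_const, nsmul_eq_mul]
    exact mul_comm _ _
  rw [Finset.sum_congr rfl (fun x _ => hxs x), Finset.sum_const, Finset.card_univ, hN,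
    nsmul_eq_mul]
  have h1 : (-1 : ℝ) ^ n * (-1 : ℝ) ^ n = 1 := by
    rw [← pow_add]
    exact Even.neg_one_pow ⟨n, rfl⟩
  have h2 : C * (n : ℝ) = (Nat.factorial n : ℝ) := by
    rw [hCdef]
    exact_mod_cast hfc
  have h3 : ((Nat.factorial n : ℕ) : ℝ) ≠ 0 := by
    exact_mod_cast (Nat.factorial_ne_zero n)
  have hn1 : ((n - 1 : ℕ) : ℝ) = (n : ℝ) - 1 := by
    rw [Nat.cast_sub (by omega : 1 ≤ n)]
    norm_num
  rw [hn1]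
  have hA : (n : ℝ) ≠ 0 := by
    have : (2 : ℝ) ≤ (n : ℝ) := by exact_mod_cast hn
    linarith
  have hB : (n : ℝ) - 1 ≠ 0 := by
    have : (2 : ℝ) ≤ (n : ℝ) := by exact_mod_cast hn
    linarith
  have hkey : ∀ t : ℝ, (1 / ((Nat.factorial n) : ℝ)) * ((-1 : ℝ) ^ n * ((n : ℝ)
        * (t * ((-1 : ℝ) ^ (n + 1) * C)))) = -t := by
    intro t
    rw [pow_succ]
    field_simp
    linear_combination (-t * (n : ℝ) * C) * h1 + (-t) * h2
  rw [hkey (f n / (n : ℝ) - f (n - 1) / ((n : ℝ) - 1))]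
  ring
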